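/- For each natural number m ≥ 1, the set S_{≤m} = {y ∈ [0, 2/3] : the level set L(y) has at most m elements} is nowhere dense in ℝ (the interior of its closure is empty). -/

import Mathlib

open Set MeasureTheory ENNReal

/-- `phi x` is the distance from `x` to the nearest integer. -/
noncomputable def phi (x : ℝ) : ℝ := |x - (round x : ℤ)|

/-- The Takagi function. -/
noncomputable def T (x : ℝ) : ℝ := ∑' n : ℕ, phi (2 ^ n * x) / 2 ^ n

/-- The `n`-th binary digit of `x` (terminating expansion for dyadic rationals). -/
noncomputable def eps (n : ℕ) (x : ℝ) : ℤ := ⌊2 ^ n * x⌋ - 2 * ⌊2 ^ (n - 1) * x⌋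

/-- `D k x = ∑_{j=1}^k (-1)^{ε_j(x)}`, the excess of 0 digits over 1 digits. -/
noncomputable def D (k : ℕ) (x : ℝ) : ℤ := ∑ j ∈ Finset.Icc 1 k, (1 - 2 * eps j x)

/-- The level set of the Takagi function at level `y`. -/
def L (y : ℝ) : Set ℝ := {x | x ∈ Set.Icc (0:ℝ) 1 ∧ T x = y}

/-- `x` is a balanced dyadic rational of order `m`. -/
def BalancedOfOrder (x : ℝ) (m : ℕ) : Prop :=
  x ∈ Set.Ico (0:ℝ) 1 ∧ (∃ k : ℤ, x = (k : ℝ) / 2 ^ (2 * m)) ∧ D (2 * m) x = 0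

/-- The generation of a balanced dyadic rational of order `m`:
the number of indices `1 ≤ j ≤ 2m` with `D j x = 0`. -/
noncomputable def generation (x : ℝ) (m : ℕ) : ℕ :=
  ((Finset.Icc 1 (2 * m)).filter (fun j => D j x = 0)).card

/-- A balanced dyadic rational of order `m` is leading if `D j x ≥ 0` for all `1 ≤ j ≤ 2m`. -/
def Leading (x : ℝ) (m : ℕ) : Prop := ∀ j ∈ Finset.Icc 1 (2 * m), 0 ≤ D j x

/-- The equivalence relation whose classes are the local level sets. -/
def locSetoid : Setoid ℝ where
  r x x' := ∀ n : ℕ, 1 ≤ n → |D n x| = |D n x'|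
  iseqv := ⟨fun _ _ _ => rfl, fun h n hn => (h n hn).symm,
    fun h g n hn => (h n hn).trans (g n hn)⟩

/-- The set of local level sets contained in `L y`: the image of `L y ∩ [0,1)`
under the quotient map of `locSetoid`. -/
def locClasses (y : ℝ) : Set (Quotient locSetoid) :=
  Quotient.mk locSetoid '' (L y ∩ Set.Ico (0:ℝ) 1)



lemma phi_nonneg (x : ℝ) : 0 ≤ phi x := abs_nonneg _

lemma phi_le_half (x : ℝ) : phi x ≤ 1/2 := abs_sub_round x

lemma phi_add_int (x : ℝ) (k : ℤ) : phi (x + k) = phi x := by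
  unfold phi; rw [round_add_intCast]; push_cast; ring_nf

lemma phi_le_abs_sub_int (x : ℝ) (m : ℤ) : phi x ≤ |x - m| := by
  rcases eq_or_ne m (round x) with h | h
  · subst h; exact le_refl _
  · have h1 : (1:ℝ) ≤ |(m : ℝ) - round x| := by
      have : (m : ℤ) - round x ≠ 0 := sub_ne_zero.mpr h
      have := Int.one_le_abs this
      calc (1:ℝ) ≤ |((m - round x : ℤ) : ℝ)| := by exact_mod_cast this
        _ = |(m:ℝ) - round x| := by push_cast; ring_nf
    have h2 : |(m:ℝ) - round x| ≤ |x - m| + |x - round x| := by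
      have : (m:ℝ) - round x = -(x - m) + (x - round x) := by ring
      rw [this]
      exact (abs_add_le _ _).trans (by rw [abs_neg])
    have := phi_le_half x
    unfold phi at *
    linarith
lemma phi_lipschitz (a b : ℝ) : |phi a - phi b| ≤ |a - b| := by
  have h1 : phi a ≤ |a - b| + phi b := by
    have := phi_le_abs_sub_int a (round b)
    have h2 : |a - (round b : ℝ)| ≤ |a - b| + |b - round b| := by
      have : a - (round b : ℝ) = (a - b) + (b - round b) := by ring
      rw [this]; exact abs_add_le _ _
    unfold phi at *; linarith
  have h2 : phi b ≤ |a - b| + phi a := by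
    have := phi_le_abs_sub_int b (round a)
    have h2 : |b - (round a : ℝ)| ≤ |a - b| + |a - round a| := by
      have : b - (round a : ℝ) = -(a - b) + (a - round a) := by ring
      rw [this]; exact (abs_add_le _ _).trans (by rw [abs_neg])
    unfold phi at *; linarith
  rw [abs_sub_le_iff]; constructor <;> linarith

lemma phi_continuous : Continuous phi := by
  have : LipschitzWith 1 phi := by
    intro a b
    rw [edist_dist, edist_dist, ENNReal.coe_one, one_mul]
    apply ENNReal.ofReal_le_ofReal
    rw [Real.dist_eq, Real.dist_eq]
    exact phi_lipschitz a b
  exact this.continuous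

lemma phi_eq_self {x : ℝ} (h0 : 0 ≤ x) (h1 : x ≤ 1/2) : phi x = x := by
  rcases lt_or_eq_of_le h1 with h | h
  · have : round x = 0 := by
      rw [round_eq]; rw [Int.floor_eq_zero_iff]; constructor <;> simp <;> linarith
    unfold phi; rw [this]; simp [abs_of_nonneg h0]
  · subst h
    have : round (1/2 : ℝ) = 1 := by norm_num [round_eq]
    unfold phi; rw [this]; norm_num

lemma phi_eq_one_sub {x : ℝ} (h0 : 1/2 ≤ x) (h1 : x ≤ 1) : phi x = 1 - x := by
  have : round x = 1 := by
    rw [round_eq]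
    have : ⌊x + 1/2⌋ = 1 := by
      apply Int.floor_eq_iff.mpr
      norm_num
      constructor <;> linarith
    exact this
  unfold phi; rw [this]
  rw [abs_of_nonpos (by push_cast; linarith)]
  push_cast; ring

lemma term_bound (x : ℝ) (n : ℕ) : ‖phi (2 ^ n * x) / 2 ^ n‖ ≤ (1/2:ℝ)^n := by
  rw [Real.norm_eq_abs, abs_div, abs_of_nonneg (phi_nonneg _), abs_of_nonneg (by positivity : (0:ℝ) ≤ 2^n)]
  rw [div_le_iff₀ (by positivity)]
  calc phi (2^n * x) ≤ 1/2 := phi_le_half _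
    _ ≤ 1 := by norm_num
    _ ≤ (1/2)^n * 2^n := by rw [← mul_pow]; norm_num

lemma T_summable (x : ℝ) : Summable (fun n : ℕ => phi (2 ^ n * x) / 2 ^ n) := by
  apply Summable.of_norm_bounded summable_geometric_two (term_bound x)

lemma T_continuous : Continuous T := by
  apply continuous_tsum (fun n => ((phi_continuous.comp (continuous_const.mul continuous_id)).div_const _)) summable_geometric_two
  intro n x; exact term_bound x n

lemma T_nonneg (x : ℝ) : 0 ≤ T x :=
  tsum_nonneg (fun n => div_nonneg (phi_nonneg _) (by positivity))

lemma T_funcEq (x : ℝ) : T x = phi x + T (2 * x) / 2 := by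
  have h := Summable.tsum_eq_zero_add (T_summable x)
  have key : ∀ n : ℕ, phi (2 ^ (n+1) * x) / 2 ^ (n+1) = (1/2) * (phi (2 ^ n * (2*x)) / 2 ^ n) := by
    intro n
    have h1 : (2:ℝ) ^ (n+1) * x = 2^n * (2*x) := by ring
    rw [h1, pow_succ]; ring
  rw [tsum_congr key, tsum_mul_left] at h
  unfold T
  rw [h]
  simp only [pow_zero, one_mul]
  ring

lemma T_add_int (x : ℝ) (k : ℤ) : T (x + k) = T x := by
  unfold T
  apply tsum_congr
  intro n
  congr 1
  have : (2:ℝ)^n * (x + k) = 2^n * x + ((2^n * k : ℤ) : ℝ) := by push_cast; ring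
  rw [this, phi_add_int]

lemma T_zero : T 0 = 0 := by
  unfold T
  convert tsum_zero with n
  rw [mul_zero]
  have : phi 0 = 0 := by rw [phi_eq_self le_rfl (by norm_num)]
  rw [this]; simp

lemma T_one : T 1 = 0 := by
  have : (1:ℝ) = 0 + (1:ℤ) := by norm_num
  rw [this, T_add_int, T_zero]

lemma T_branch0 {t : ℝ} (h0 : 0 ≤ t) (h1 : t ≤ 1) : T (t/2) = t/2 + T t / 2 := by
  have := T_funcEq (t/2)
  rw [phi_eq_self (by linarith) (by linarith)] at this
  rw [this]; ring_nf

lemma T_branch1 {t : ℝ} (h0 : 0 ≤ t) (h1 : t ≤ 1) : T ((1+t)/2) = (1-t)/2 + T t / 2 := by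
  have := T_funcEq ((1+t)/2)
  rw [phi_eq_one_sub (by linarith) (by linarith)] at this
  have h2 : 2 * ((1+t)/2) = t + (1:ℤ) := by push_cast; ring
  rw [h2, T_add_int] at this
  rw [this]; ring_nf

lemma T_half : T (1/2) = 1/2 := by
  have h := T_branch0 (zero_le_one (α := ℝ)) le_rfl
  rw [T_one] at h
  norm_num at h
  exact h

lemma pow_mod3 (n : ℕ) : ∃ k : ℕ, 2^n = 3*k+1 ∨ 2^n = 3*k+2 := by
  induction n with
  | zero => exact ⟨0, Or.inl rfl⟩
  | succ n ih =>
    obtain ⟨k, h | h⟩ := ih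
    · exact ⟨2*k, Or.inr (by rw [pow_succ, h]; ring)⟩
    · exact ⟨2*k+1, Or.inl (by rw [pow_succ, h]; ring)⟩

lemma T_third : T (1/3) = 2/3 := by
  have hterm : ∀ n : ℕ, phi (2^n * (1/3:ℝ)) = 1/3 := by
    intro n
    obtain ⟨k, h | h⟩ := pow_mod3 n
    · have : (2:ℝ)^n * (1/3) = 1/3 + (k:ℤ) := by
        have : (2:ℝ)^n = 3*k+1 := by exact_mod_cast congrArg (Nat.cast : ℕ → ℝ) h
        rw [this]; push_cast; ring
      rw [this, phi_add_int, phi_eq_self (by norm_num) (by norm_num)]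
    · have : (2:ℝ)^n * (1/3) = 2/3 + (k:ℤ) := by
        have : (2:ℝ)^n = 3*k+2 := by exact_mod_cast congrArg (Nat.cast : ℕ → ℝ) h
        rw [this]; push_cast; ring
      rw [this, phi_add_int, phi_eq_one_sub (by norm_num) (by norm_num)]
      norm_num
  unfold T
  rw [tsum_congr (fun n => by rw [hterm n, one_div_pow]; ring : ∀ n:ℕ, phi (2^n * (1/3:ℝ))/2^n = (1/3) * (1/2)^n)]
  rw [tsum_mul_left, tsum_geometric_two]
  norm_num

-- LVAL_DONE
noncomputable def lval : List Bool → ℝ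
  | [] => 0
  | b :: l => ((if b then 1 else 0) + lval l)/2

-- LSLOPE_DONE
def lslope : List Bool → ℤ
  | [] => 0
  | b :: l => (if b then -1 else 1) + lslope l

lemma lval_nonneg (l : List Bool) : 0 ≤ lval l := by
  induction l with
  | nil => simp [lval]
  | cons b l ih => simp only [lval]; positivity

lemma lval_le (l : List Bool) : lval l ≤ 1 - (1/2)^l.length := by
  induction l with
  | nil => simp [lval]
  | cons b l ih =>
    simp only [lval, List.length_cons, pow_succ]
    have : (if b then (1:ℝ) else 0) ≤ 1 := by split <;> norm_num
    have h2 := lval_nonneg l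
    cases b with
    | false =>
      norm_num
      nlinarith [pow_pos (by norm_num : (0:ℝ) < 1/2) l.length]
    | true =>
      norm_num
      nlinarith [pow_pos (by norm_num : (0:ℝ) < 1/2) l.length]

lemma lval_lt_one (l : List Bool) : lval l < 1 :=
  (lval_le l).trans_lt (by nlinarith [pow_pos (by norm_num : (0:ℝ) < 1/2) l.length])

lemma T_selfsim (l : List Bool) : ∀ t : ℝ, 0 ≤ t → t ≤ 1 →
    T (lval l + t / 2 ^ l.length) =
      T (lval l) + (lslope l : ℝ) * t / 2 ^ l.length + T t / 2 ^ l.length := by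
  induction l with
  | nil => intro t h0 h1; simp [lval, lslope, T_zero]
  | cons b l ih =>
    intro t h0 h1
    have hlen : (b :: l).length = l.length + 1 := rfl
    set k := l.length with hk
    have hu0 : 0 ≤ lval l + t / 2 ^ k := add_nonneg (lval_nonneg l) (by positivity)
    have hu1 : lval l + t / 2 ^ k ≤ 1 := by
      have := lval_le l
      have h2 : t / 2^k ≤ (1/2)^k := by
        rw [div_le_iff₀ (by positivity)]
        calc t ≤ 1 := h1
          _ ≤ (1/2:ℝ)^k * 2^k := by rw [← mul_pow]; norm_num
      linarith
    have hval0 : 0 ≤ lval l := lval_nonneg l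
    have hval1 : lval l ≤ 1 := (lval_lt_one l).le
    have ihlt := ih t h0 h1
    cases b with
    | false =>
      have e1 : lval (false :: l) = lval l / 2 := by simp [lval]
      have e2 : lval (false :: l) + t / 2 ^ (false :: l).length
          = (lval l + t / 2 ^ k) / 2 := by
        rw [e1, hlen, pow_succ]; ring
      rw [e2, T_branch0 hu0 hu1, e1, T_branch0 hval0 hval1, ihlt]
      have e3 : (lslope (false :: l) : ℝ) = 1 + lslope l := by simp [lslope]
      rw [e3, hlen, pow_succ]
      ring
    | true =>
      have e1 : lval (true :: l) = (1 + lval l) / 2 := by simp [lval, add_comm]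
      have e2 : lval (true :: l) + t / 2 ^ (true :: l).length
          = (1 + (lval l + t / 2 ^ k)) / 2 := by
        rw [e1, hlen, pow_succ]; ring
      rw [e2, T_branch1 hu0 hu1, e1, T_branch1 hval0 hval1, ihlt]
      have e3 : (lslope (true :: l) : ℝ) = -1 + lslope l := by simp [lslope]
      rw [e3, hlen, pow_succ]
      ring

lemma lval_append (l e : List Bool) :
    lval (l ++ e) = lval l + lval e / 2 ^ l.length := by
  induction l with
  | nil => simp [lval]
  | cons b l ih =>
    simp only [List.cons_append, lval, List.length_cons, pow_succ]
    rw [ih]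
    ring

lemma lslope_append (l e : List Bool) : lslope (l ++ e) = lslope l + lslope e := by
  induction l with
  | nil => simp [lslope]
  | cons b l ih =>
    simp only [List.cons_append, lslope]
    rw [ih]
    ring

lemma lslope_replicate_true (n : ℕ) : lslope (List.replicate n true) = -n := by
  induction n with
  | zero => simp [lslope]
  | succ n ih => simp only [List.replicate_succ, lslope, ih]; push_cast; ring

lemma lslope_replicate_false (n : ℕ) : lslope (List.replicate n false) = n := by
  induction n with
  | zero => simp [lslope]
  | succ n ih => simp only [List.replicate_succ, lslope, ih]; push_cast; ring

lemma lval_dyadic : ∀ k : ℕ, ∀ j : ℕ, j < 2^k → ∃ l : List Bool, l.length = k ∧ lval l = j / 2^k := by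
  intro k
  induction k with
  | zero => intro j hj; interval_cases j; exact ⟨[], rfl, by simp [lval]⟩
  | succ k ih =>
    intro j hj
    rcases lt_or_ge j (2^k) with h | h
    · obtain ⟨l, hl, hv⟩ := ih j h
      refine ⟨false :: l, by simp [hl], ?_⟩
      simp only [lval, hv, hl, pow_succ]
      norm_num
      ring
    · obtain ⟨l, hl, hv⟩ := ih (j - 2^k) (by omega)
      refine ⟨true :: l, by simp [hl], ?_⟩
      simp only [lval, hv, hl, pow_succ]
      have : ((j - 2^k : ℕ) : ℝ) = (j : ℝ) - 2^k := by
        push_cast [Nat.cast_sub h]; ring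
      rw [this]
      norm_num
      field_simp
      ring

lemma T_surj {y : ℝ} (h0 : 0 ≤ y) (h1 : y ≤ 2/3) : ∃ t, 0 ≤ t ∧ t ≤ 1/3 ∧ T t = y := by
  have hsub := intermediate_value_Icc (by norm_num : (0:ℝ) ≤ 1/3) (T_continuous.continuousOn)
  rw [T_zero, T_third] at hsub
  obtain ⟨t, ht, hTt⟩ := hsub ⟨h0, h1⟩
  exact ⟨t, ht.1, ht.2, hTt⟩

lemma T_quarter : T (1/4) = 1/2 := by
  have h := T_branch0 (by norm_num : (0:ℝ) ≤ 1/2) (by norm_num)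
  rw [T_half] at h
  norm_num at h
  convert h using 2 <;> norm_num

lemma copyA : ∀ t : ℝ, 0 ≤ t → t ≤ 1 → T (1/4 + t/4) = 1/2 + T t / 4 := by
  intro t h0 h1
  have h := T_selfsim [false, true] t h0 h1
  have e1 : lval [false, true] = 1/4 := by norm_num [lval]
  have e2 : (lslope [false, true] : ℝ) = 0 := by norm_num [lslope]
  have e3 : ([false, true] : List Bool).length = 2 := rfl
  rw [e1, e2, e3] at h
  norm_num at h
  rw [show (1:ℝ)/4 + t/4 = 1/4 + t/2^2 from by ring] at *
  rw [h, T_quarter]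

lemma copyB : ∀ t : ℝ, 0 ≤ t → t ≤ 1 → T (1/2 + t/4) = 1/2 + T t / 4 := by
  intro t h0 h1
  have h := T_selfsim [true, false] t h0 h1
  have e1 : lval [true, false] = 1/2 := by norm_num [lval]
  have e2 : (lslope [true, false] : ℝ) = 0 := by norm_num [lslope]
  have e3 : ([true, false] : List Bool).length = 2 := rfl
  rw [e1, e2, e3] at h
  norm_num at h
  rw [show (1:ℝ)/2 + t/4 = 1/2 + t/2^2 from by ring] at *
  rw [h, T_half]

lemma multi : ∀ m : ℕ, ∀ y : ℝ, 2/3 - (1/6)/4^m < y → y ≤ 2/3 →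
    ∃ s : Finset ℝ, s.card = m+1 ∧ ∀ x ∈ s, 0 ≤ x ∧ x ≤ 1 ∧ T x = y := by
  intro m
  induction m with
  | zero =>
    intro y hy1 hy2
    norm_num at hy1
    obtain ⟨t, h0, h1, hT⟩ := T_surj (by linarith) hy2
    refine ⟨{t}, by simp, ?_⟩
    intro x hx
    simp only [Finset.mem_singleton] at hx
    subst hx
    exact ⟨h0, by linarith, hT⟩
  | succ m ih =>
    intro y hy1 hy2
    set y' := 4*y - 2 with hy'
    have h4 : (1:ℝ) ≤ 4^m := one_le_pow₀ (by norm_num)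
    have hy'1 : 2/3 - (1/6)/4^m < y' := by
      have he : (1/6:ℝ)/4^(m+1) * 4 = (1/6)/4^m := by
        rw [pow_succ]; field_simp
      simp only [hy']
      nlinarith
    have hy'2 : y' ≤ 2/3 := by simp only [hy']; linarith
    have hy'pos : 0 < y' := by
      have : (1/6:ℝ)/4^m ≤ 1/6 := div_le_self (by norm_num) h4
      linarith
    obtain ⟨s', hcard, hs'⟩ := ih y' hy'1 hy'2
    obtain ⟨t0, ht00, ht03, ht0T⟩ := T_surj hy'pos.le hy'2
    have ht0pos : 0 < t0 := by
      rcases lt_or_eq_of_le ht00 with h | h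
      · exact h
      · exfalso; rw [← h, T_zero] at ht0T; linarith
    set sA := s'.image (fun t => 1/4 + t/4) with hsA
    have hinj : Function.Injective (fun t : ℝ => 1/4 + t/4) := by
      intro a b hab; simp only at hab; linarith
    set xB := 1/2 + t0/4 with hxB
    have hxB_notmem : xB ∉ sA := by
      intro hmem
      rw [hsA, Finset.mem_image] at hmem
      obtain ⟨t, hts, hteq⟩ := hmem
      have := (hs' t hts).2.1
      simp only [hxB] at hteq
      linarith
    refine ⟨insert xB sA, ?_, ?_⟩
    · rw [Finset.card_insert_of_notMem hxB_notmem, hsA,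
        Finset.card_image_of_injective _ hinj, hcard]
    · intro x hx
      rcases Finset.mem_insert.mp hx with h | h
      · subst h
        refine ⟨by simp only [hxB]; linarith, by simp only [hxB]; linarith, ?_⟩
        rw [hxB, copyB t0 ht00 (by linarith), ht0T]
        simp only [hy']; ring
      · rw [hsA, Finset.mem_image] at h
        obtain ⟨t, hts, hteq⟩ := h
        obtain ⟨h0, h1, hT⟩ := hs' t hts
        subst hteq
        refine ⟨by linarith, by linarith, ?_⟩
        rw [copyA t h0 h1, hT]
        simp only [hy']; ring

set_option maxHeartbeats 1000000 in
/-- Around any point of `[0, 2/3]` and any `ε`, there is a nonempty open interval within `ε` of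
the point on which every level set has more than `m` points. -/
lemma window (m : ℕ) {y0 ε : ℝ} (hy00 : 0 ≤ y0) (hy02 : y0 ≤ 2/3) (hε : 0 < ε) :
    ∃ lo hi : ℝ, lo < hi ∧ Ioo lo hi ⊆ Metric.ball y0 ε ∧
      ∀ y ∈ Ioo lo hi, ∃ s : Finset ℝ, s.card = m+1 ∧ ↑s ⊆ L y := by
  obtain ⟨x0, hx00, hx03, hx0T⟩ := T_surj hy00 hy02
  obtain ⟨δ, hδ, hTδ⟩ := Metric.continuous_iff.mp T_continuous x0 (ε/2) (by linarith)
  obtain ⟨k, hk⟩ := exists_pow_lt_of_lt_one (lt_min (by linarith) (by linarith) :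
      (0:ℝ) < min (δ/2) (ε/2)) (by norm_num : (1/2:ℝ) < 1)
  have h2k : (0:ℝ) < 2^k := by positivity
  have hpow : (1/2:ℝ)^k = 1/2^k := by rw [div_pow]; norm_num
  set j := ⌊2^k * x0⌋₊ with hj
  have hjle : (j:ℝ) ≤ 2^k * x0 := Nat.floor_le (by positivity)
  have hjlt : 2^k * x0 < (j:ℝ) + 1 := Nat.lt_floor_add_one _
  have hjk : j < 2^k := by
    have h' : (j:ℝ) < ((2^k : ℕ) : ℝ) := by push_cast; nlinarith
    exact_mod_cast h'
  obtain ⟨l, hlen, hlv⟩ := lval_dyadic k j hjk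
  set e := if 0 ≤ lslope l then List.replicate (lslope l).toNat true
    else List.replicate (-lslope l).toNat false with he
  set l₂ := l ++ e with hl₂
  have hslope : lslope l₂ = 0 := by
    rw [hl₂, lslope_append, he]
    split
    · rw [lslope_replicate_true, Int.toNat_of_nonneg (by assumption)]; ring
    · rw [lslope_replicate_false, Int.toNat_of_nonneg (by omega)]; ring
  set x := lval l₂ with hx
  set n := l₂.length with hn
  have hnk : k ≤ n := by rw [hn, hl₂, List.length_append, hlen]; omega
  have h2n : (0:ℝ) < 2^n := by positivity
  have hpownk : (1:ℝ)/2^n ≤ 1/2^k := by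
    apply one_div_le_one_div_of_le h2k
    apply pow_le_pow_right₀ (by norm_num) hnk
  have hkkδ : (1:ℝ)/2^k < δ/2 := by rw [← hpow]; exact hk.trans_le (min_le_left _ _)
  have hkkε : (1:ℝ)/2^k < ε/2 := by rw [← hpow]; exact hk.trans_le (min_le_right _ _)
  -- x is close to x0
  have hxx0 : |x - x0| < δ := by
    have h1 : x = lval l + lval e / 2^k := by rw [hx, hl₂, lval_append, hlen]
    have h2 : 0 ≤ lval e / 2^k := div_nonneg (lval_nonneg e) h2k.le
    have h3 : lval e / 2^k < 1/2^k := by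
      rw [div_lt_div_iff₀ h2k h2k]
      nlinarith [lval_lt_one e]
    have h4 : 0 ≤ x0 - lval l := by
      rw [hlv, sub_nonneg, div_le_iff₀ h2k]; nlinarith
    have h5 : x0 - lval l < 1/2^k := by
      rw [hlv, sub_lt_iff_lt_add, ← add_div, lt_div_iff₀ h2k]; nlinarith
    rw [h1, abs_lt]
    constructor <;> nlinarith
  have hTx : |T x - y0| < ε/2 := by
    have h' := hTδ x (by rw [Real.dist_eq]; exact hxx0)
    rw [Real.dist_eq, hx0T] at h'
    exact h'
  have hx0' : 0 ≤ x := lval_nonneg l₂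
  have hpn : (1/2:ℝ)^n = 1/2^n := by rw [div_pow]; norm_num
  have hx1' : x + 1/2^n ≤ 1 := by
    have h' := lval_le l₂
    rw [← hn, hpn] at h'
    rw [hx]; linarith
  -- the self-similarity with zero slope
  have hss : ∀ t : ℝ, 0 ≤ t → t ≤ 1 → T (x + t/2^n) = T x + T t / 2^n := by
    intro t h0 h1
    have h' := T_selfsim l₂ t h0 h1
    rw [← hn, ← hx, hslope] at h'
    push_cast at h'
    rw [h']; ring
  set a : ℝ := (1/6)/4^m with ha
  have hapos : 0 < a := by positivity
  have hale : a ≤ 1/6 := div_le_self (by norm_num) (one_le_pow₀ (by norm_num))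
  clear_value x n
  clear hxx0 hlv hlen hslope hx hn hnk hjle hjlt hk hkkδ
  refine ⟨T x + (2/3 - a)/2^n, T x + (2/3)/2^n, ?_, ?_, ?_⟩
  · apply add_lt_add_right
    rw [div_lt_div_iff₀ h2n h2n]
    nlinarith [mul_pos hapos h2n]
  · intro y hy
    rw [Metric.mem_ball, Real.dist_eq, abs_lt]
    obtain ⟨hylo, hyhi⟩ := hy
    have hlo0 : 0 ≤ (2/3 - a)/2^n := by
      apply div_nonneg _ h2n.le; linarith
    have hhi : (2/3:ℝ)/2^n < 1/2^k := by
      apply lt_of_lt_of_le _ hpownk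
      rw [div_lt_div_iff₀ h2n h2n]
      nlinarith [h2n]
    rw [abs_lt] at hTx
    constructor <;> linarith
  · intro y hy
    obtain ⟨hylo, hyhi⟩ := hy
    set w := (y - T x) * 2^n with hw
    have hw1 : 2/3 - a < w := by
      have h' : (2/3 - a)/2^n < y - T x := by linarith
      rw [div_lt_iff₀ h2n] at h'
      rw [hw]; linarith
    have hw2 : w ≤ 2/3 := by
      have h' : y - T x < (2/3)/2^n := by linarith
      rw [lt_div_iff₀ h2n] at h'
      rw [hw]; linarith
    obtain ⟨s, hcard, hs⟩ := multi m w hw1 hw2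
    refine ⟨s.image (fun t => x + t/2^n), ?_, ?_⟩
    · rw [Finset.card_image_of_injective _ (fun p q hpq => ?_), hcard]
      have h' : p / 2^n = q / 2^n := by simp only [_root_.add_right_inj] at hpq; linarith [hpq]
      have h'' := congrArg (fun z => z * 2^n) h'
      rwa [div_mul_cancel₀ _ (ne_of_gt h2n), div_mul_cancel₀ _ (ne_of_gt h2n)] at h''
    · intro z hz
      simp only [Finset.coe_image, mem_image, Finset.mem_coe] at hz
      obtain ⟨t, hts, rfl⟩ := hz
      obtain ⟨ht0, ht1, htT⟩ := hs t hts
      constructor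
      · constructor
        · positivity
        · have htn : t/2^n ≤ 1/2^n := by gcongr
          linarith
      · rw [hss t ht0 ht1, htT, hw, mul_div_assoc, div_self (ne_of_gt h2n), mul_one]
        ring


theorem stmt10 (m : ℕ) (hm : 1 ≤ m) :
    IsNowhereDense {y : ℝ | y ∈ Set.Icc (0:ℝ) (2/3) ∧ (L y).encard ≤ m} := by
  set S := {y : ℝ | y ∈ Set.Icc (0:ℝ) (2/3) ∧ (L y).encard ≤ m} with hS
  rw [IsNowhereDense]
  by_contra hne
  rw [← Ne, ← Set.nonempty_iff_ne_empty] at hne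
  obtain ⟨y0, hy0⟩ := hne
  have hSsub : S ⊆ Icc (0:ℝ) (2/3) := fun y hy => hy.1
  have hclos : closure S ⊆ Icc 0 (2/3) := closure_minimal hSsub isClosed_Icc
  obtain ⟨ε, hε, hball⟩ := Metric.isOpen_iff.mp isOpen_interior y0 hy0
  have hball' : Metric.ball y0 ε ⊆ closure S := hball.trans interior_subset
  have hy0mem : y0 ∈ Icc (0:ℝ) (2/3) := hclos (interior_subset hy0)
  obtain ⟨lo, hi, hlohi, hsubball, hmulti⟩ := window m hy0mem.1 hy0mem.2 hε
  have hmid : (lo+hi)/2 ∈ Ioo lo hi := ⟨by linarith, by linarith⟩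
  have hcl : (lo+hi)/2 ∈ closure S := hball' (hsubball hmid)
  obtain ⟨y, hyIoo, hyS⟩ := _root_.mem_closure_iff.mp hcl (Ioo lo hi) isOpen_Ioo hmid
  obtain ⟨s, hcard, hsub⟩ := hmulti y hyIoo
  have h1 : ((m+1 : ℕ) : ℕ∞) ≤ (L y).encard := by
    rw [← hcard, ← Set.encard_coe_eq_coe_finsetCard s]
    exact Set.encard_mono hsub
  have h2 : (L y).encard ≤ (m : ℕ∞) := hyS.2
  have h3 : ((m+1 : ℕ) : ℕ∞) ≤ ((m:ℕ) : ℕ∞) := h1.trans h2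
  exact absurd (Nat.cast_le.mp h3) (by omega)
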